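/- Let a and b be coprime odd integers and let β ≥ 2 be an integer. Then 2^β does not divide a + b if and only if for every odd positive integer n there is no positive integer k such that 2^β·n divides a^k + b^k. -/

import Mathlib

private lemma odd_intCast_zmod_two {a : ℤ} (ha : Odd a) : (a : ZMod 2) = 1 := by
  obtain ⟨m, rfl⟩ := ha
  push_cast
  have : (2 : ZMod 2) = 0 := by decide
  rw [this]; ring

private lemma odd_sq_zmod_four {a : ℤ} (ha : Odd a) : ((a : ZMod 4)) ^ 2 = 1 := by
  obtain ⟨m, rfl⟩ := ha
  have h : (2 * m + 1) ^ 2 = 4 * (m ^ 2 + m) + 1 := by ring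
  have : (((2 * m + 1) ^ 2 : ℤ) : ZMod 4) = ((4 * (m ^ 2 + m) + 1 : ℤ) : ZMod 4) := by
    rw [h]
  push_cast at this
  have h4 : (4 : ZMod 4) = 0 := by decide
  rw [h4] at this
  simpa using this

private lemma dvd_add_of_dvd_pow_odd (a b : ℤ) (ha : Odd a) (hb : Odd b) (β k : ℕ)
    (hk : Odd k) (h : (2 : ℤ) ^ β ∣ a ^ k + b ^ k) : (2 : ℤ) ^ β ∣ a + b := by
  set c := ∑ i ∈ Finset.range k, a ^ i * (-b) ^ (k - 1 - i) with hc
  have hid : c * (a + b) = a ^ k + b ^ k := by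
    have h1 := geom_sum₂_mul a (-b) k
    rw [hk.neg_pow] at h1
    rw [← hc] at h1
    simpa [sub_neg_eq_add] using h1
  have hnotdvd : ¬ (2 : ℤ) ∣ c := by
    intro hdvd
    have h0 : (c : ZMod 2) = 0 := (ZMod.intCast_zmod_eq_zero_iff_dvd c 2).2 (by exact_mod_cast hdvd)
    have hcval : (c : ZMod 2) = (k : ZMod 2) := by
      rw [hc]
      push_cast
      have hA : (a : ZMod 2) = 1 := odd_intCast_zmod_two ha
      have hB : (-(b : ZMod 2)) = 1 := by
        have := odd_intCast_zmod_two hb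
        rw [this]; decide
      simp [hA, hB]
    rw [hcval] at h0
    have : (2 : ℕ) ∣ k := by
      exact_mod_cast (ZMod.natCast_eq_zero_iff k 2).1 h0
    exact (Nat.not_even_iff_odd.2 hk) (even_iff_two_dvd.2 this)
  have hoddc : Odd c := Int.not_even_iff_odd.1 (fun he => hnotdvd (even_iff_two_dvd.1 he))
  have hcop : IsCoprime ((2 : ℤ) ^ β) c := by
    apply IsCoprime.pow_left
    rw [Int.isCoprime_iff_gcd_eq_one]
    have : Odd c.natAbs := Int.natAbs_odd.2 hoddc
    simpa [Int.gcd] using Nat.coprime_two_left.2 this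
  have hdvd' : (2 : ℤ) ^ β ∣ c * (a + b) := hid ▸ h
  exact hcop.dvd_of_dvd_mul_left hdvd'

/-- Let `a` and `b` be coprime odd integers and `β ≥ 2`. Then `2^β ∤ a + b` if and only if
no odd positive integer `n` is `2^β`-good. -/
theorem not_dvd_add_iff_no_odd_good
    (a b : ℤ) (ha : Odd a) (hb : Odd b) (hco : IsCoprime a b)
    (β : ℕ) (hβ : 2 ≤ β) :
    ¬ (2 ^ β : ℤ) ∣ a + b ↔
      ∀ n : ℕ, 0 < n → Odd n →
        ¬ ∃ k : ℕ, 0 < k ∧ ((2 ^ β * n : ℕ) : ℤ) ∣ a ^ k + b ^ k := by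
  constructor
  · intro h n hn hnodd
    rintro ⟨k, hk, hdvd⟩
    have hpow : (2 : ℤ) ^ β ∣ a ^ k + b ^ k := by
      refine dvd_trans ?_ hdvd
      push_cast
      exact Dvd.intro _ rfl
    rcases Nat.even_or_odd k with hke | hko
    · -- k even: a^k + b^k ≡ 2 mod 4, contradiction with β ≥ 2
      obtain ⟨m, rfl⟩ := hke
      have hm : 0 < m := by omega
      have h4 : (4 : ℤ) ∣ a ^ (m + m) + b ^ (m + m) := by
        have : (4 : ℤ) ∣ 2 ^ β := by
          calc (4 : ℤ) = 2 ^ 2 := by norm_num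
          _ ∣ 2 ^ β := pow_dvd_pow 2 hβ
        exact this.trans hpow
      have h0 : ((a ^ (m + m) + b ^ (m + m) : ℤ) : ZMod 4) = 0 :=
        (ZMod.intCast_zmod_eq_zero_iff_dvd _ 4).2 (by exact_mod_cast h4)
      have hval : ((a ^ (m + m) + b ^ (m + m) : ℤ) : ZMod 4) = 2 := by
        push_cast
        have : ∀ x : ZMod 4, x ^ 2 = 1 → x ^ (m + m) = 1 := by
          intro x hx
          have : x ^ (m + m) = (x ^ 2) ^ m := by rw [← pow_mul]; ring_nf
          rw [this, hx, one_pow]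
        rw [this _ (odd_sq_zmod_four ha), this _ (odd_sq_zmod_four hb)]
        decide
      rw [h0] at hval
      exact absurd hval.symm (by decide)
    · exact h (dvd_add_of_dvd_pow_odd a b ha hb β k hko hpow)
  · intro h hdvd
    refine h 1 one_pos odd_one ⟨1, one_pos, ?_⟩
    simpa using hdvd
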